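/- arXiv:1811.07780 — 3 statements merged into one kernel-verified Lean document; each statement's English description precedes it below -/
import Mathlib

section
/- For any finite simple graph G with m edges, the sum over all edges (u,v) of min(deg(u), deg(v)) is at most 5·m·√m. -/
open Finset

lemma aux_pair_sum {V : Type*} [Fintype V] [DecidableEq V] (G : SimpleGraph V)
    [DecidableRel G.Adj] (f : Sym2 V → ℝ) :
    ∑ p ∈ Finset.univ.filter (fun p : V × V => G.Adj p.1 p.2), f (Sym2.mk p.1 p.2)
      = 2 * ∑ e ∈ G.edgeFinset, f e := by
  rw [← Finset.sum_fiberwise_of_maps_to' (g := fun p : V × V => Sym2.mk p.1 p.2)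
    (t := G.edgeFinset) (fun p hp => by
      simp only [Finset.mem_filter] at hp
      simpa [SimpleGraph.mem_edgeFinset] using hp.2) f]
  rw [Finset.mul_sum]
  refine Finset.sum_congr rfl ?_
  intro e he
  induction e using Sym2.inductionOn with
  | hf u v =>
    rw [SimpleGraph.mem_edgeFinset, SimpleGraph.mem_edgeSet] at he
    have hfib : ((Finset.univ.filter (fun p : V × V => G.Adj p.1 p.2)).filter
        (fun p => Sym2.mk p.1 p.2 = s(u, v))) = {(u, v), (v, u)} := by
      ext ⟨x, y⟩
      simp only [Finset.mem_filter, Finset.mem_univ, true_and, Finset.mem_insert,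
        Finset.mem_singleton, Prod.mk.injEq, Sym2.eq_iff]
      constructor
      · rintro ⟨_, (⟨rfl, rfl⟩ | ⟨rfl, rfl⟩)⟩
        · left; exact ⟨rfl, rfl⟩
        · right; exact ⟨rfl, rfl⟩
      · rintro (⟨rfl, rfl⟩ | ⟨rfl, rfl⟩)
        · exact ⟨he, Or.inl ⟨rfl, rfl⟩⟩
        · exact ⟨he.symm, Or.inr ⟨rfl, rfl⟩⟩
    rw [hfib, Finset.sum_const, Finset.card_insert_of_notMem, Finset.card_singleton]
    · push_cast
      ring
    · simp only [Finset.mem_singleton, Prod.mk.injEq]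
      rintro ⟨rfl, -⟩
      exact G.irrefl he

/-- For any finite simple graph `G` with `m` edges, the sum over all edges `(u,v)` of
`min (deg u) (deg v)` is at most `5 * m * √m`. -/
theorem stmt_0 {V : Type*} [Fintype V] [DecidableEq V] (G : SimpleGraph V)
    [DecidableRel G.Adj] (m : ℕ) (hm : m = G.edgeFinset.card) :
    ∑ e ∈ G.edgeFinset,
        Sym2.lift ⟨fun u v => (min (G.degree u) (G.degree v) : ℝ),
          fun u v => by simp [min_comm]⟩ e
      ≤ 5 * m * Real.sqrt m := by
  rcases Nat.eq_zero_or_pos m with hm0 | hm0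
  · have : G.edgeFinset = ∅ := Finset.card_eq_zero.mp (by omega)
    simp [this, hm0]
  -- the degree sum
  have hdeg : ∑ v, (G.degree v : ℝ) = 2 * m := by
    have := G.sum_degrees_eq_twice_card_edges
    rw [hm]
    exact_mod_cast congrArg (Nat.cast : ℕ → ℝ) this
  have hdegnn : ∀ v, (0 : ℝ) ≤ G.degree v := fun v => by positivity
  -- the product-of-degrees sum over edges
  set fmul : Sym2 V → ℝ :=
    Sym2.lift ⟨fun u v => (G.degree u : ℝ) * G.degree v, fun u v => by ring⟩ with hfmul
  have hS : ∑ e ∈ G.edgeFinset, fmul e ≤ 2 * (m : ℝ) ^ 2 := by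
    have h2 : 2 * ∑ e ∈ G.edgeFinset, fmul e
        = ∑ p ∈ Finset.univ.filter (fun p : V × V => G.Adj p.1 p.2),
            (G.degree p.1 : ℝ) * G.degree p.2 := by
      rw [← aux_pair_sum G fmul]
      refine Finset.sum_congr rfl fun p _ => ?_
      obtain ⟨x, y⟩ := p
      simp [hfmul]
    have hP : ∑ p ∈ Finset.univ.filter (fun p : V × V => G.Adj p.1 p.2),
        (G.degree p.1 : ℝ) * G.degree p.2 ≤ 4 * (m : ℝ) ^ 2 := by
      have hre : ∑ p ∈ Finset.univ.filter (fun p : V × V => G.Adj p.1 p.2),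
          (G.degree p.1 : ℝ) * G.degree p.2
          = ∑ u, ∑ v ∈ G.neighborFinset u, (G.degree u : ℝ) * G.degree v := by
        rw [Finset.sum_filter, Fintype.sum_prod_type]
        refine Finset.sum_congr rfl fun u _ => ?_
        rw [SimpleGraph.neighborFinset_eq_filter, Finset.sum_filter]
      rw [hre]
      have hstep : ∀ u : V, ∑ v ∈ G.neighborFinset u, (G.degree u : ℝ) * G.degree v
          ≤ (G.degree u : ℝ) * (2 * m) := by
        intro u
        rw [← Finset.mul_sum]
        refine mul_le_mul_of_nonneg_left ?_ (hdegnn u)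
        calc ∑ v ∈ G.neighborFinset u, (G.degree v : ℝ)
            ≤ ∑ v, (G.degree v : ℝ) :=
              Finset.sum_le_sum_of_subset_of_nonneg (Finset.subset_univ _)
                (fun v _ _ => hdegnn v)
          _ = 2 * m := hdeg
      calc ∑ u, ∑ v ∈ G.neighborFinset u, (G.degree u : ℝ) * G.degree v
          ≤ ∑ u, (G.degree u : ℝ) * (2 * m) := Finset.sum_le_sum fun u _ => hstep u
        _ = (∑ u, (G.degree u : ℝ)) * (2 * m) := by rw [← Finset.sum_mul]
        _ = 4 * (m : ℝ) ^ 2 := by rw [hdeg]; ring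
    nlinarith [h2, hP]
  -- per-edge bound
  set r : ℝ := Real.sqrt (2 * m) with hr
  have hrpos : 0 < r := Real.sqrt_pos.mpr (by positivity)
  have hr2 : r * r = 2 * m := Real.mul_self_sqrt (by positivity)
  have hedge : ∀ e ∈ G.edgeFinset,
      Sym2.lift ⟨fun u v => (min (G.degree u) (G.degree v) : ℝ),
        fun u v => by simp [min_comm]⟩ e ≤ r + fmul e / r := by
    intro e _
    induction e using Sym2.inductionOn with
    | hf u v =>
      simp only [Sym2.lift_mk, hfmul]
      push_cast
      rw [← sub_le_iff_le_add', le_div_iff₀ hrpos]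
      set a : ℝ := min (G.degree u : ℝ) (G.degree v : ℝ) with ha
      have ha0 : 0 ≤ a := le_min (hdegnn u) (hdegnn v)
      have hsq : a * a ≤ (G.degree u : ℝ) * G.degree v :=
        mul_le_mul (min_le_left _ _) (min_le_right _ _) ha0 (hdegnn u)
      nlinarith [sq_nonneg (a - r)]
  -- put it together
  calc ∑ e ∈ G.edgeFinset,
        Sym2.lift ⟨fun u v => (min (G.degree u) (G.degree v) : ℝ),
          fun u v => by simp [min_comm]⟩ e
      ≤ ∑ e ∈ G.edgeFinset, (r + fmul e / r) := Finset.sum_le_sum hedge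
    _ = m * r + (∑ e ∈ G.edgeFinset, fmul e) / r := by
        rw [Finset.sum_add_distrib, Finset.sum_const, ← Finset.sum_div, ← hm]
        push_cast
        ring
    _ ≤ m * r + (2 * (m : ℝ) ^ 2) / r := by gcongr
    _ = 2 * m * r := by
        field_simp
        nlinarith [hr2]
    _ ≤ 5 * m * Real.sqrt m := by
        have hrs : r = Real.sqrt 2 * Real.sqrt m := by
          rw [hr, Real.sqrt_mul (by norm_num)]
        rw [hrs]
        have h2 : Real.sqrt 2 ≤ 5 / 2 := by
          rw [show (5 / 2 : ℝ) = Real.sqrt ((5 / 2) ^ 2) by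
            rw [Real.sqrt_sq (by norm_num)]]
          exact Real.sqrt_le_sqrt (by norm_num)
        nlinarith [Real.sqrt_nonneg m, Nat.cast_nonneg (α := ℝ) m,
          mul_nonneg (Nat.cast_nonneg (α := ℝ) m) (Real.sqrt_nonneg m)]
end

section
/- With the star estimator X defined by sampling a vertex v with probability d_v/(2m), sampling an ℓ-subset of its neighborhood uniformly, and setting X = (2m/d_v)·binom(d_v,ℓ), one has Var(X) ≤ E[X²] ≤ 2m·Σ_{v: d_v ≥ ℓ} binom(d_v,ℓ)·d_v^{ℓ−1} ≤ 2 m^ℓ · E[X]. -/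
open Finset

/-- Variance bound for the star estimator:
`Var(X) ≤ E[X²] ≤ 2m · Σ_{v : deg v ≥ ℓ} C(deg v, ℓ) · deg v ^ (ℓ-1) ≤ 2 m^ℓ · E[X]`. -/
theorem stmt_16 {V : Type*} [Fintype V] [DecidableEq V] (G : SimpleGraph V)
    [DecidableRel G.Adj] (ℓ : ℕ) (hℓ : 1 ≤ ℓ)
    (m : ℕ) (hm : m = G.edgeFinset.card) (hm1 : 1 ≤ m)
    (p X : V → ℝ)
    (hp : ∀ v, p v = (G.degree v : ℝ) / (2 * m))
    (hX : ∀ v, X v =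
      if ℓ ≤ G.degree v then (2 * (m : ℝ) / (G.degree v)) * ((G.degree v).choose ℓ : ℝ)
      else 0) :
    (∑ v : V, p v * (X v - ∑ w : V, p w * X w) ^ 2 ≤ ∑ v : V, p v * X v ^ 2) ∧
    (∑ v : V, p v * X v ^ 2 ≤
      2 * m * ∑ v ∈ Finset.univ.filter (fun v => ℓ ≤ G.degree v),
        ((G.degree v).choose ℓ : ℝ) * (G.degree v : ℝ) ^ (ℓ - 1)) ∧
    (2 * m * ∑ v ∈ Finset.univ.filter (fun v => ℓ ≤ G.degree v),
        ((G.degree v).choose ℓ : ℝ) * (G.degree v : ℝ) ^ (ℓ - 1) ≤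
      2 * (m : ℝ) ^ ℓ * ∑ v : V, p v * X v) := by
  have hmpos : (0:ℝ) < m := by exact_mod_cast hm1
  have hdm : ∀ v : V, G.degree v ≤ m := by
    intro v
    rw [hm, ← G.card_incidenceFinset_eq_degree v]
    apply card_le_card
    intro e he
    rw [SimpleGraph.mem_incidenceFinset] at he
    exact SimpleGraph.mem_edgeFinset.mpr he.1
  -- sum of p is 1
  have hsum : ∑ v : V, p v = 1 := by
    simp only [hp]
    rw [← Finset.sum_div]
    rw [div_eq_one_iff_eq (by positivity)]
    exact_mod_cast (hm ▸ G.sum_degrees_eq_twice_card_edges)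
  -- pointwise products
  have hpX : ∀ v, p v * X v =
      if ℓ ≤ G.degree v then ((G.degree v).choose ℓ : ℝ) else 0 := by
    intro v
    rw [hp, hX]
    split_ifs with h
    · have hd : (0:ℝ) < G.degree v := by
        have : 1 ≤ G.degree v := le_trans hℓ h
        exact_mod_cast this
      field_simp
    · ring
  have hpX2 : ∀ v, p v * X v ^ 2 =
      if ℓ ≤ G.degree v then
        2 * (m:ℝ) / (G.degree v) * ((G.degree v).choose ℓ : ℝ)^2 else 0 := by
    intro v
    rw [hp, hX]
    split_ifs with h
    · have hd : (0:ℝ) < G.degree v := by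
        have : 1 ≤ G.degree v := le_trans hℓ h
        exact_mod_cast this
      field_simp
    · ring
  set μ := ∑ w : V, p w * X w with hμ
  refine ⟨?_, ?_, ?_⟩
  · -- Var ≤ E[X²]
    have : ∑ v : V, p v * (X v - μ) ^ 2 = (∑ v : V, p v * X v ^ 2) - μ ^ 2 := by
      have : ∀ v, p v * (X v - μ) ^ 2 =
          p v * X v ^ 2 - 2 * μ * (p v * X v) + μ ^ 2 * p v := by
        intro v; ring
      rw [Finset.sum_congr rfl fun v _ => this v, Finset.sum_add_distrib,
        Finset.sum_sub_distrib, ← Finset.mul_sum, ← Finset.mul_sum, hsum, ← hμ]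
      ring
    rw [this]
    nlinarith [sq_nonneg μ]
  · -- E[X²] ≤ 2m Σ C d^{ℓ-1}
    rw [Finset.sum_congr rfl fun v _ => hpX2 v, Finset.sum_ite, Finset.sum_const_zero,
      add_zero, Finset.mul_sum]
    apply Finset.sum_le_sum
    intro v hv
    rw [Finset.mem_filter] at hv
    have hℓd : ℓ ≤ G.degree v := hv.2
    have hd : (0:ℝ) < G.degree v := by
      have : 1 ≤ G.degree v := le_trans hℓ hℓd
      exact_mod_cast this
    have hC : ((G.degree v).choose ℓ : ℝ) ≤ (G.degree v : ℝ) ^ ℓ := by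
      exact_mod_cast Nat.choose_le_pow (G.degree v) ℓ
    have hpow : (G.degree v : ℝ) ^ ℓ = (G.degree v : ℝ) * (G.degree v : ℝ) ^ (ℓ - 1) := by
      rw [← pow_succ']
      congr 1
      omega
    rw [div_mul_eq_mul_div, div_le_iff₀ hd]
    have hCnn : (0:ℝ) ≤ ((G.degree v).choose ℓ : ℝ) := by positivity
    calc 2 * (m:ℝ) * ((G.degree v).choose ℓ : ℝ)^2
        = (2 * m * ((G.degree v).choose ℓ : ℝ)) * ((G.degree v).choose ℓ : ℝ) := by ring
      _ ≤ (2 * m * ((G.degree v).choose ℓ : ℝ)) * ((G.degree v : ℝ) ^ ℓ) := by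
          apply mul_le_mul_of_nonneg_left hC (by positivity)
      _ = 2 * m * (((G.degree v).choose ℓ : ℝ) * (G.degree v : ℝ) ^ (ℓ-1)) * G.degree v := by
          rw [hpow]; ring
  · -- 2m Σ C d^{ℓ-1} ≤ 2 m^ℓ Σ C
    rw [hμ]
    rw [Finset.sum_congr rfl fun v _ => hpX v, Finset.sum_ite, Finset.sum_const_zero,
      add_zero, Finset.mul_sum, Finset.mul_sum]
    apply Finset.sum_le_sum
    intro v hv
    rw [Finset.mem_filter] at hv
    have hdv : (G.degree v : ℝ) ≤ m := by exact_mod_cast hdm v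
    have hmpow : (m:ℝ) ^ ℓ = (m:ℝ) * (m:ℝ) ^ (ℓ - 1) := by
      rw [← pow_succ']; congr 1; omega
    have hCnn : (0:ℝ) ≤ ((G.degree v).choose ℓ : ℝ) := by positivity
    have hdpow : (G.degree v : ℝ) ^ (ℓ-1) ≤ (m:ℝ) ^ (ℓ-1) :=
      pow_le_pow_left₀ (by positivity) hdv _
    calc 2 * (m:ℝ) * (((G.degree v).choose ℓ : ℝ) * (G.degree v : ℝ) ^ (ℓ-1))
        ≤ 2 * (m:ℝ) * (((G.degree v).choose ℓ : ℝ) * (m : ℝ) ^ (ℓ-1)) := by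
          apply mul_le_mul_of_nonneg_left (mul_le_mul_of_nonneg_left hdpow hCnn) (by positivity)
      _ = 2 * (m:ℝ)^ℓ * ((G.degree v).choose ℓ : ℝ) := by rw [hmpow]; ring
end

section
/- With the star estimator X for S_ℓ as above, Var(X) ≤ 4m · ℓ^{2ℓ} · (#S_ℓ)^{2−1/ℓ}, where #S_ℓ = Σ_{v: d_v ≥ ℓ} binom(d_v, ℓ). -/
open Finset


open Finset

lemma fact_prod (n : ℕ) : ∏ i ∈ Finset.range n, (i + 1) = n.factorial := by
  induction n with
  | zero => simp
  | succ k ih => rw [Finset.prod_range_succ, ih, Nat.factorial_succ, mul_comm]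

lemma fact_prod_rev (n : ℕ) : ∏ i ∈ Finset.range n, (n - i) = n.factorial := by
  rw [← fact_prod n, ← Finset.prod_range_reflect (fun i => i + 1) n]
  refine Finset.prod_congr rfl fun j hj => ?_
  simp only [Finset.mem_range] at hj
  omega

lemma pow_le_pow_mul_choose {d ℓ : ℕ} (h : ℓ ≤ d) : d ^ ℓ ≤ ℓ ^ ℓ * d.choose ℓ := by
  have key : d ^ ℓ * ℓ.factorial ≤ ℓ ^ ℓ * d.descFactorial ℓ := by
    have hd : d ^ ℓ = ∏ _i ∈ Finset.range ℓ, d := by simp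
    have hl : ℓ ^ ℓ = ∏ _i ∈ Finset.range ℓ, ℓ := by simp
    rw [← fact_prod_rev ℓ, Nat.descFactorial_eq_prod_range, hd, hl,
      ← Finset.prod_mul_distrib, ← Finset.prod_mul_distrib]
    refine Finset.prod_le_prod' fun i hi => ?_
    simp only [Finset.mem_range] at hi
    have hiℓ : i ≤ ℓ := hi.le
    have hid : i ≤ d := hi.le.trans h
    zify [hiℓ, hid]
    nlinarith [Nat.mul_le_mul_right i h]
  rw [Nat.descFactorial_eq_factorial_mul_choose] at key
  have hf := Nat.factorial_pos ℓ
  have key2 : d ^ ℓ * ℓ.factorial ≤ ℓ ^ ℓ * d.choose ℓ * ℓ.factorial := by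
    calc d ^ ℓ * ℓ.factorial ≤ ℓ ^ ℓ * (ℓ.factorial * d.choose ℓ) := key
      _ = ℓ ^ ℓ * d.choose ℓ * ℓ.factorial := by ring
  exact Nat.le_of_mul_le_mul_right key2 hf



lemma choose_div_le {d ℓ : ℕ} (hℓ : 1 ≤ ℓ) (h : ℓ ≤ d)
    (hpow : d ^ ℓ ≤ ℓ ^ ℓ * d.choose ℓ) {S : ℝ}
    (hCS : ((d.choose ℓ : ℕ) : ℝ) ≤ S) :
    ((d.choose ℓ : ℕ) : ℝ) / d ≤ (ℓ : ℝ) ^ (ℓ - 1) * S ^ ((1 : ℝ) - 1 / ℓ) := by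
  have hd0 : (0 : ℝ) < d := by
    have : 0 < d := lt_of_lt_of_le hℓ h
    exact_mod_cast this
  have hℓ0 : (0 : ℝ) < ℓ := by exact_mod_cast hℓ
  have hℓne : (ℓ : ℝ) ≠ 0 := ne_of_gt hℓ0
  have hC0 : 0 ≤ ((d.choose ℓ : ℕ) : ℝ) := Nat.cast_nonneg _
  have h1 : ((d.choose ℓ : ℕ) : ℝ) ≤ (d : ℝ) ^ ℓ := by exact_mod_cast Nat.choose_le_pow d ℓ
  have h2 : (d : ℝ) ^ ℓ ≤ (ℓ : ℝ) ^ ℓ * ((d.choose ℓ : ℕ) : ℝ) := by exact_mod_cast hpow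
  -- d ≤ ℓ * ((d.choose ℓ : ℕ) : ℝ)^(1/ℓ)
  have step2 : (d : ℝ) ≤ (ℓ : ℝ) * ((d.choose ℓ : ℕ) : ℝ) ^ ((ℓ : ℝ)⁻¹) := by
    have hmono := Real.rpow_le_rpow (by positivity) h2
      (by positivity : (0:ℝ) ≤ (ℓ : ℝ)⁻¹)
    rwa [Real.pow_rpow_inv_natCast hd0.le (by omega),
      Real.mul_rpow (by positivity) hC0,
      Real.pow_rpow_inv_natCast hℓ0.le (by omega)] at hmono
  -- d^(ℓ-1) ≤ ℓ^(ℓ-1) * ((d.choose ℓ : ℕ) : ℝ)^(1-1/ℓ)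
  have hexp : ((ℓ : ℝ)⁻¹) * ((ℓ - 1 : ℕ) : ℝ) = (1 : ℝ) - 1 / ℓ := by
    rw [Nat.cast_sub hℓ, Nat.cast_one]
    field_simp
  have step3 : (d : ℝ) ^ (ℓ - 1) ≤ (ℓ : ℝ) ^ (ℓ - 1) * S ^ ((1 : ℝ) - 1 / ℓ) := by
    calc (d : ℝ) ^ (ℓ - 1) ≤ ((ℓ : ℝ) * ((d.choose ℓ : ℕ) : ℝ) ^ ((ℓ : ℝ)⁻¹)) ^ (ℓ - 1) :=
          pow_le_pow_left₀ hd0.le step2 _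
      _ = (ℓ : ℝ) ^ (ℓ - 1) * ((d.choose ℓ : ℕ) : ℝ) ^ ((1 : ℝ) - 1 / ℓ) := by
          rw [mul_pow, ← Real.rpow_natCast (((d.choose ℓ : ℕ) : ℝ) ^ ((ℓ:ℝ)⁻¹)) (ℓ - 1),
            ← Real.rpow_mul hC0, hexp]
      _ ≤ (ℓ : ℝ) ^ (ℓ - 1) * S ^ ((1 : ℝ) - 1 / ℓ) := by
          refine mul_le_mul_of_nonneg_left ?_ (by positivity)
          refine Real.rpow_le_rpow hC0 hCS ?_
          have : 1 / (ℓ:ℝ) ≤ 1 := by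
            rw [div_le_one hℓ0]; exact_mod_cast hℓ
          linarith
  calc ((d.choose ℓ : ℕ) : ℝ) / d ≤ (d : ℝ) ^ (ℓ - 1) := by
        rw [div_le_iff₀ hd0]
        calc ((d.choose ℓ : ℕ) : ℝ) ≤ (d:ℝ) ^ ℓ := h1
          _ = (d:ℝ) ^ (ℓ - 1) * d := by
              rw [← pow_succ]
              congr 1
              omega
    _ ≤ _ := step3

/-- Improved variance bound for the star estimator:
`Var(X) ≤ 4m · ℓ^{2ℓ} · (#S_ℓ)^{2 - 1/ℓ}` where `#S_ℓ = Σ_{v : deg v ≥ ℓ} C(deg v, ℓ)`. -/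
theorem stmt_17 {V : Type*} [Fintype V] [DecidableEq V] (G : SimpleGraph V)
    [DecidableRel G.Adj] (ℓ : ℕ) (hℓ : 1 ≤ ℓ)
    (m : ℕ) (hm : m = G.edgeFinset.card) (hm1 : 1 ≤ m)
    (p X : V → ℝ)
    (hp : ∀ v, p v = (G.degree v : ℝ) / (2 * m))
    (hX : ∀ v, X v =
      if ℓ ≤ G.degree v then (2 * (m : ℝ) / (G.degree v)) * ((G.degree v).choose ℓ : ℝ)
      else 0) :
    ∑ v : V, p v * (X v - ∑ w : V, p w * X w) ^ 2 ≤
      4 * m * (ℓ : ℝ) ^ (2 * ℓ) *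
        (∑ v ∈ Finset.univ.filter (fun v => ℓ ≤ G.degree v),
            ((G.degree v).choose ℓ : ℝ)) ^ ((2 : ℝ) - 1 / ℓ) := by
  have hm0 : (0 : ℝ) < m := by exact_mod_cast hm1
  have hℓ0 : (0 : ℝ) < ℓ := by exact_mod_cast hℓ
  set F := Finset.univ.filter (fun v => ℓ ≤ G.degree v) with hF
  set S : ℝ := ∑ v ∈ F, ((G.degree v).choose ℓ : ℝ) with hS
  set μ : ℝ := ∑ w : V, p w * X w with hμ
  -- sum of degrees
  have hdeg : ∑ v : V, G.degree v = 2 * m := by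
    rw [hm]; exact G.sum_degrees_eq_twice_card_edges
  have hpsum : ∑ v : V, p v = 1 := by
    simp only [hp]
    rw [← Finset.sum_div]
    rw [div_eq_one_iff_eq (by positivity)]
    exact_mod_cast hdeg
  -- variance ≤ second moment
  have hvar : ∑ v : V, p v * (X v - μ) ^ 2 ≤ ∑ v : V, p v * X v ^ 2 := by
    have expand : ∀ v, p v * (X v - μ) ^ 2
        = p v * X v ^ 2 - 2 * μ * (p v * X v) + μ ^ 2 * p v := fun v => by ring
    rw [Finset.sum_congr rfl fun v _ => expand v, Finset.sum_add_distrib,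
      Finset.sum_sub_distrib, ← Finset.mul_sum, ← Finset.mul_sum, ← hμ, hpsum]
    nlinarith [sq_nonneg μ]
  -- second moment restricted to F
  have hzero : ∀ v ∈ Finset.univ, v ∉ F → p v * X v ^ 2 = 0 := by
    intro v _ hv
    rw [hX v, if_neg (by simpa [hF] using hv)]
    ring
  have hrestrict : ∑ v : V, p v * X v ^ 2 = ∑ v ∈ F, p v * X v ^ 2 :=
    (Finset.sum_subset (Finset.subset_univ F) hzero).symm
  have hS0tot : (0:ℝ) ≤ S := Finset.sum_nonneg fun v _ => Nat.cast_nonneg _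
  rcases hS0tot.eq_or_lt with hS0 | hSpos
  · -- S = 0 : filter is empty
    have hFempty : F = ∅ := by
      rw [Finset.eq_empty_iff_forall_notMem]
      intro v hv
      have h1 : ((G.degree v).choose ℓ : ℝ) = 0 :=
        (Finset.sum_eq_zero_iff_of_nonneg (fun i _ => Nat.cast_nonneg _)).mp hS0.symm v hv
      have h2 := Nat.choose_pos (Finset.mem_filter.mp hv).2
      have h3 : (G.degree v).choose ℓ = 0 := by exact_mod_cast h1
      omega
    have hL0 : ∑ v : V, p v * (X v - μ) ^ 2 ≤ 0 := by
      calc ∑ v : V, p v * (X v - μ) ^ 2 ≤ ∑ v : V, p v * X v ^ 2 := hvar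
        _ = ∑ v ∈ F, p v * X v ^ 2 := hrestrict
        _ = 0 := by rw [hFempty]; simp
    refine hL0.trans ?_
    exact mul_nonneg (by positivity) (Real.rpow_nonneg hS0tot _)
  · -- main case
    have hterm : ∀ v ∈ F, p v * X v ^ 2 ≤
        2 * (m:ℝ) * ((ℓ : ℝ) ^ (ℓ - 1) * S ^ ((1:ℝ) - 1 / ℓ)) * ((G.degree v).choose ℓ : ℝ) := by
      intro v hv
      have hvF : ℓ ≤ G.degree v := (Finset.mem_filter.mp hv).2
      have hdnat : 0 < G.degree v := lt_of_lt_of_le hℓ hvF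
      have hd0 : (0:ℝ) < G.degree v := by exact_mod_cast hdnat
      have heq : p v * X v ^ 2 =
          2 * (m:ℝ) * (((G.degree v).choose ℓ : ℝ) / (G.degree v)) * ((G.degree v).choose ℓ : ℝ) := by
        rw [hp, hX, if_pos hvF]
        field_simp
      have hCS : (((G.degree v).choose ℓ : ℕ) : ℝ) ≤ S :=
        Finset.single_le_sum (f := fun v => (((G.degree v).choose ℓ : ℕ) : ℝ))
          (fun i _ => Nat.cast_nonneg _) hv
      have hkey := choose_div_le hℓ hvF (pow_le_pow_mul_choose hvF) hCS
      rw [heq]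
      exact mul_le_mul_of_nonneg_right
        (mul_le_mul_of_nonneg_left hkey (by positivity)) (Nat.cast_nonneg _)
    have hrw : S ^ ((1:ℝ) - 1 / ℓ) * S = S ^ ((2:ℝ) - 1 / ℓ) := by
      calc S ^ ((1:ℝ) - 1 / ℓ) * S = S ^ (((1:ℝ) - 1 / ℓ) + 1) := by
            rw [Real.rpow_add hSpos, Real.rpow_one]
        _ = S ^ ((2:ℝ) - 1 / ℓ) := by ring_nf
    have hP : (ℓ:ℝ) ^ (ℓ - 1) ≤ (ℓ:ℝ) ^ (2 * ℓ) :=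
      pow_le_pow_right₀ (by exact_mod_cast hℓ) (by omega)
    calc ∑ v : V, p v * (X v - μ) ^ 2 ≤ ∑ v : V, p v * X v ^ 2 := hvar
      _ = ∑ v ∈ F, p v * X v ^ 2 := hrestrict
      _ ≤ ∑ v ∈ F, 2 * (m:ℝ) * ((ℓ : ℝ) ^ (ℓ - 1) * S ^ ((1:ℝ) - 1 / ℓ)) *
            ((G.degree v).choose ℓ : ℝ) := Finset.sum_le_sum hterm
      _ = 2 * (m:ℝ) * ((ℓ : ℝ) ^ (ℓ - 1) * S ^ ((1:ℝ) - 1 / ℓ)) * S := by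
            rw [hS, ← Finset.mul_sum]
      _ = 2 * (m:ℝ) * (ℓ : ℝ) ^ (ℓ - 1) * (S ^ ((1:ℝ) - 1 / ℓ) * S) := by ring
      _ = 2 * (m:ℝ) * (ℓ : ℝ) ^ (ℓ - 1) * S ^ ((2:ℝ) - 1 / ℓ) := by rw [hrw]
      _ ≤ 4 * (m:ℝ) * (ℓ : ℝ) ^ (2 * ℓ) * S ^ ((2:ℝ) - 1 / ℓ) := by
            refine mul_le_mul_of_nonneg_right ?_ (Real.rpow_nonneg hSpos.le _)
            nlinarith [hm0, hP, pow_nonneg hℓ0.le (ℓ - 1)]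
end
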